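/- Let V be a finite type with at least 3 elements and let Ω : V → V → V → ℝ be a 2-particle gauge potential, i.e. Ω i k j = −(Ω i j k) for all i, j, k. Then there exist a pure Aharonov–Bohm gauge potential Ω_AB and a pure statistics gauge potential Ω_S such that Ω i j k = Ω_AB i j k + Ω_S i j k whenever i, j, k are pairwise distinct; moreover the decomposition is unique in the sense that any two such pairs (Ω_AB, Ω_S) agree on all triples of pairwise distinct vertices. Explicitly, one may take Ω_AB i j k = (1/(|V|−2)) · ∑_{p ∉ {j,k}} Ω p j k. -/

import Mathlib

open Finset

/-- A 2-particle gauge potential: antisymmetric in its last two arguments. -/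
def IsGaugePotential {V : Type*} (Ω : V → V → V → ℝ) : Prop :=
  ∀ i j k, Ω i k j = -(Ω i j k)

/-- A pure Aharonov–Bohm gauge potential: the phase for the move `j → k` does not
depend on the position of the stationary particle. -/
def IsPureAB {V : Type*} (Ω : V → V → V → ℝ) : Prop :=
  ∀ i i' j k, i ≠ j → i ≠ k → i' ≠ j → i' ≠ k → Ω i j k = Ω i' j k

/-- A pure statistics gauge potential: the phase for `j → k` averaged over all
positions of the stationary particle vanishes. -/
def IsPureStat {V : Type*} [Fintype V] [DecidableEq V] (Ω : V → V → V → ℝ) : Prop :=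
  ∀ j k, j ≠ k → ∑ i ∈ univ.filter (fun i => i ≠ j ∧ i ≠ k), Ω i j k = 0

/-- Every 2-particle gauge potential decomposes uniquely (on triples of pairwise
distinct vertices) as a sum of a pure Aharonov–Bohm and a pure statistics gauge
potential; explicitly one may take
`Ω_AB i j k = (1/(|V|−2))·∑_{p ∉ {j,k}} Ω p j k`. -/
theorem gauge_potential_decomposition {V : Type*} [Fintype V] [DecidableEq V]
    (hV : 3 ≤ Fintype.card V) (Ω : V → V → V → ℝ) (hΩ : IsGaugePotential Ω) :
    (∃ ΩAB ΩS : V → V → V → ℝ,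
      IsGaugePotential ΩAB ∧ IsGaugePotential ΩS ∧ IsPureAB ΩAB ∧ IsPureStat ΩS ∧
      (∀ i j k, i ≠ j → i ≠ k → j ≠ k → Ω i j k = ΩAB i j k + ΩS i j k) ∧
      (∀ i j k, i ≠ j → i ≠ k → j ≠ k →
        ΩAB i j k = (1 / ((Fintype.card V : ℝ) - 2)) *
          ∑ p ∈ univ.filter (fun p => p ≠ j ∧ p ≠ k), Ω p j k)) ∧
    (∀ ΩAB₁ ΩS₁ ΩAB₂ ΩS₂ : V → V → V → ℝ,
      IsGaugePotential ΩAB₁ → IsGaugePotential ΩS₁ → IsPureAB ΩAB₁ → IsPureStat ΩS₁ →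
      (∀ i j k, i ≠ j → i ≠ k → j ≠ k → Ω i j k = ΩAB₁ i j k + ΩS₁ i j k) →
      IsGaugePotential ΩAB₂ → IsGaugePotential ΩS₂ → IsPureAB ΩAB₂ → IsPureStat ΩS₂ →
      (∀ i j k, i ≠ j → i ≠ k → j ≠ k → Ω i j k = ΩAB₂ i j k + ΩS₂ i j k) →
      ∀ i j k, i ≠ j → i ≠ k → j ≠ k →
        ΩAB₁ i j k = ΩAB₂ i j k ∧ ΩS₁ i j k = ΩS₂ i j k) := by
  have hn2 : 2 ≤ Fintype.card V := le_trans (by norm_num) hV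
  have hnR : (2:ℝ) < (Fintype.card V : ℝ) := by exact_mod_cast lt_of_lt_of_le (by norm_num) hV
  have hne : (Fintype.card V : ℝ) - 2 ≠ 0 := by linarith
  set c : ℝ := 1 / ((Fintype.card V : ℝ) - 2) with hc
  -- cardinality of the filtered set
  have hcard : ∀ j k : V, j ≠ k →
      ((univ.filter (fun p => p ≠ j ∧ p ≠ k)).card : ℝ) = (Fintype.card V : ℝ) - 2 := by
    intro j k hjk
    have hset : univ.filter (fun p => p ≠ j ∧ p ≠ k) = univ \ {j, k} := by
      ext p; simp [and_comm]
    rw [hset, card_sdiff_of_subset (by simp)]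
    rw [Nat.cast_sub (by simpa [card_insert_of_notMem, hjk] using hn2)]
    simp [card_insert_of_notMem, hjk]
  -- symmetry of the filter set
  have hswap : ∀ j k : V, (univ.filter (fun p => p ≠ k ∧ p ≠ j)) =
      (univ.filter (fun p => p ≠ j ∧ p ≠ k)) := by
    intro j k; ext p; simp [and_comm]
  -- antisymmetry of the summed potential
  have hsumneg : ∀ (F : V → V → V → ℝ), IsGaugePotential F → ∀ j k : V,
      ∑ p ∈ univ.filter (fun p => p ≠ k ∧ p ≠ j), F p k j
        = -∑ p ∈ univ.filter (fun p => p ≠ j ∧ p ≠ k), F p j k := by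
    intro F hF j k
    rw [hswap, ← Finset.sum_neg_distrib]
    exact Finset.sum_congr rfl fun p _ => hF p j k
  set A : V → V → V → ℝ :=
    fun _ j k => c * ∑ p ∈ univ.filter (fun p => p ≠ j ∧ p ≠ k), Ω p j k with hA
  set S : V → V → V → ℝ := fun i j k => Ω i j k - A i j k with hS
  have hAgauge : IsGaugePotential A := by
    intro i j k
    simp only [hA]
    rw [hsumneg Ω hΩ j k]; ring
  have hSgauge : IsGaugePotential S := by
    intro i j k
    simp only [hS]
    rw [hΩ i j k, hAgauge i j k]; ring
  have hAAB : IsPureAB A := by intro i i' j k _ _ _ _; rfl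
  have hSstat : IsPureStat S := by
    intro j k hjk
    simp only [hS, hA, Finset.sum_sub_distrib, Finset.sum_const, nsmul_eq_mul]
    rw [hcard j k hjk, hc]
    field_simp
    ring
  refine ⟨⟨A, S, hAgauge, hSgauge, hAAB, hSstat,
      fun i j k _ _ _ => by simp [hS], fun i j k _ _ _ => rfl⟩, ?_⟩
  intro B1 S1 B2 S2 hB1g hS1g hB1 hS1 hd1 hB2g hS2g hB2 hS2 hd2 i j k hij hik hjk
  -- key: any valid decomposition's AB part equals A
  have key : ∀ (B T : V → V → V → ℝ), IsPureAB B → IsPureStat T →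
      (∀ i j k, i ≠ j → i ≠ k → j ≠ k → Ω i j k = B i j k + T i j k) →
      B i j k = A i j k := by
    intro B T hB hT hd
    have hsum : ∑ p ∈ univ.filter (fun p => p ≠ j ∧ p ≠ k), Ω p j k
        = ((Fintype.card V : ℝ) - 2) * B i j k := by
      have h1 : ∑ p ∈ univ.filter (fun p => p ≠ j ∧ p ≠ k), Ω p j k
          = ∑ p ∈ univ.filter (fun p => p ≠ j ∧ p ≠ k), (B p j k + T p j k) := by
        refine Finset.sum_congr rfl fun p hp => ?_
        simp only [mem_filter] at hp
        exact hd p j k hp.2.1 hp.2.2 hjk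
      have h2 : ∑ p ∈ univ.filter (fun p => p ≠ j ∧ p ≠ k), B p j k
          = ((Fintype.card V : ℝ) - 2) * B i j k := by
        rw [← hcard j k hjk, ← nsmul_eq_mul, ← Finset.sum_const]
        refine Finset.sum_congr rfl fun p hp => ?_
        simp only [mem_filter] at hp
        exact hB p i j k hp.2.1 hp.2.2 hij hik
      rw [h1, Finset.sum_add_distrib, h2, hT j k hjk, add_zero]
    simp only [hA, hsum, hc]
    field_simp
  have hB12 : B1 i j k = B2 i j k := by rw [key B1 S1 hB1 hS1 hd1, key B2 S2 hB2 hS2 hd2]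
  refine ⟨hB12, ?_⟩
  have e1 := hd1 i j k hij hik hjk
  have e2 := hd2 i j k hij hik hjk
  linarith
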